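/- For a finite group G and functions f, h : G → M_t(ℂ), define ψ(a) = ‖(h*f)(a)‖²_HS. Then ψ admits a representation-theoretic factorization ψ(a) = ⟨H̃, φ(a)·F⟩ where φ is a unitary representation of G on a subspace of L²_t(G×G), F(x,y) = f(y)f(x)*, H̃(x,y) = h̃(y)h̃(x)*, and (φ(a)F)(x,y) = F(xa, ya). Consequently the Fourier algebra norm of ψ satisfies ‖ψ‖_A ≤ ‖f‖₂² · ‖h‖₂², where ‖f‖₂² = E_x[‖f(x)‖²_HS]. -/

import Mathlib

open scoped Kronecker ComplexOrder
open Finset Matrix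

attribute [local instance] Classical.propDecidable

noncomputable section

def hsNormSq {m n : Type*} [Fintype m] [Fintype n] (A : Matrix m n ℂ) : ℝ :=
  ∑ i, ∑ j, Complex.normSq (A i j)

def vnorm {n : ℕ} (u : Fin n → ℂ) : ℝ := Real.sqrt (∑ i, Complex.normSq (u i))

def opNorm {d : ℕ} (M : Matrix (Fin d) (Fin d) ℂ) : ℝ :=
  ‖Matrix.toEuclideanCLM (𝕜 := ℂ) M‖

def traceNorm {m : Type*} [Fintype m] [DecidableEq m] (A : Matrix m m ℂ) : ℝ :=
  ((Matrix.posSemidef_conjTranspose_mul_self A).1.eigenvectorUnitary.1 *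
    diagonal (((↑) : ℝ → ℂ) ∘ (√·) ∘ (Matrix.posSemidef_conjTranspose_mul_self A).1.eigenvalues) *
    (star (Matrix.posSemidef_conjTranspose_mul_self A).1.eigenvectorUnitary :
      Matrix m m ℂ)).trace.re

variable {G : Type*} [Group G] [Fintype G]

def conv {t : ℕ} (f g : G → Matrix (Fin t) (Fin t) ℂ) (x : G) : Matrix (Fin t) (Fin t) ℂ :=
  (Fintype.card G : ℂ)⁻¹ • ∑ y, f (x * y⁻¹) * g y

def adjFun {t : ℕ} (f : G → Matrix (Fin t) (Fin t) ℂ) (x : G) : Matrix (Fin t) (Fin t) ℂ :=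
  (f x⁻¹)ᴴ

def fourierMat {t d : ℕ} (f : G → Matrix (Fin t) (Fin t) ℂ)
    (ρ : G →* Matrix.unitaryGroup (Fin d) ℂ) : Matrix (Fin t × Fin d) (Fin t × Fin d) ℂ :=
  (Fintype.card G : ℂ)⁻¹ • ∑ x, (f x) ⊗ₖ (ρ x : Matrix (Fin d) (Fin d) ℂ)

def l2sq {t : ℕ} (f : G → Matrix (Fin t) (Fin t) ℂ) : ℝ :=
  (Fintype.card G : ℝ)⁻¹ * ∑ x, hsNormSq (f x)

def u2pow4 {t : ℕ} (f : G → Matrix (Fin t) (Fin t) ℂ) : ℝ := l2sq (conv (adjFun f) f)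

def IsIrred {d : ℕ} (ρ : G →* Matrix.unitaryGroup (Fin d) ℂ) : Prop :=
  ∀ M : Matrix (Fin d) (Fin d) ℂ,
    (∀ g, (ρ g : Matrix (Fin d) (Fin d) ℂ) * M = M * (ρ g : Matrix (Fin d) (Fin d) ℂ)) →
    ∃ c : ℂ, M = c • (1 : Matrix (Fin d) (Fin d) ℂ)

def IsNontrivialRep {d : ℕ} (ρ : G →* Matrix.unitaryGroup (Fin d) ℂ) : Prop :=
  ∃ g, (ρ g : Matrix (Fin d) (Fin d) ℂ) ≠ 1

def IsBiased (S : Finset G) (ε : ℝ) : Prop :=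
  S.Nonempty ∧ ∀ (d : ℕ) (ρ : G →* Matrix.unitaryGroup (Fin d) ℂ),
    IsIrred ρ → IsNontrivialRep ρ →
    opNorm ((S.card : ℂ)⁻¹ • ∑ s ∈ S, (ρ s : Matrix (Fin d) (Fin d) ℂ)) ≤ ε

def Tmat (f : G → ℂ) : Matrix G G ℂ := fun x y => f (x⁻¹ * y) / (Fintype.card G : ℂ)

/-! ### Auxiliary lemmas -/

lemma trace_conjTranspose_mul_eq {m p : Type*} [Fintype m] [Fintype p]
    (A B : Matrix m p ℂ) :
    (Aᴴ * B).trace = ∑ j, ∑ i, (starRingEnd ℂ) (A i j) * B i j := by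
  simp [Matrix.trace, Matrix.mul_apply, Matrix.diag, Matrix.conjTranspose_apply]

lemma hsNormSq_nonneg {m n : Type*} [Fintype m] [Fintype n] (A : Matrix m n ℂ) :
    0 ≤ hsNormSq A :=
  Finset.sum_nonneg fun _ _ => Finset.sum_nonneg fun _ _ => Complex.normSq_nonneg _

lemma hsNormSq_conjTranspose {m n : Type*} [Fintype m] [Fintype n] (A : Matrix m n ℂ) :
    hsNormSq Aᴴ = hsNormSq A := by
  rw [hsNormSq, Finset.sum_comm]
  simp [hsNormSq, Matrix.conjTranspose_apply, Complex.normSq_conj]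

lemma hsNormSq_mul_le {m n p : Type*} [Fintype m] [Fintype n] [Fintype p]
    (A : Matrix m n ℂ) (B : Matrix n p ℂ) :
    hsNormSq (A * B) ≤ hsNormSq A * hsNormSq B := by
  have h1 : ∀ i j, Complex.normSq ((A * B) i j) ≤
      (∑ k, Complex.normSq (A i k)) * (∑ k, Complex.normSq (B k j)) := by
    intro i j
    rw [Matrix.mul_apply, Complex.normSq_eq_norm_sq]
    calc ‖∑ k, A i k * B k j‖ ^ 2
        ≤ (∑ k, ‖A i k‖ * ‖B k j‖) ^ 2 := by
          apply pow_le_pow_left₀ (norm_nonneg _)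
          refine (norm_sum_le _ _).trans (le_of_eq ?_)
          simp
      _ ≤ (∑ k, ‖A i k‖ ^ 2) * (∑ k, ‖B k j‖ ^ 2) :=
          Finset.sum_mul_sq_le_sq_mul_sq _ _ _
      _ = _ := by simp [Complex.sq_norm]
  calc hsNormSq (A * B)
      ≤ ∑ i, ∑ j, (∑ k, Complex.normSq (A i k)) * (∑ k, Complex.normSq (B k j)) := by
        refine Finset.sum_le_sum fun i _ => Finset.sum_le_sum fun j _ => h1 i j
    _ = (∑ i, ∑ k, Complex.normSq (A i k)) * (∑ j, ∑ k, Complex.normSq (B k j)) := by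
        rw [Finset.sum_mul_sum]
    _ = hsNormSq A * hsNormSq B := by
        rw [hsNormSq, hsNormSq, Finset.sum_comm (f := fun k j => Complex.normSq (B k j))]

/-! ### The permutation representation on (G × G) × (Fin t × Fin t) -/

def permK {G : Type*} [Group G] (t : ℕ) (a : G) :
    ((G × G) × (Fin t × Fin t)) ≃ ((G × G) × (Fin t × Fin t)) :=
  ((Equiv.mulRight a).prodCongr (Equiv.mulRight a)).prodCongr (Equiv.refl _)

lemma permK_apply {G : Type*} [Group G] {t : ℕ} (a : G) (p : (G × G) × (Fin t × Fin t)) :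
    permK t a p = ((p.1.1 * a, p.1.2 * a), p.2) := rfl

lemma permK_mul {G : Type*} [Group G] {t : ℕ} (a b : G) (p : (G × G) × (Fin t × Fin t)) :
    permK t (a * b) p = permK t b (permK t a p) := by
  simp [permK_apply, mul_assoc]

def bigPerm {G : Type*} [Group G] [Fintype G] (t : ℕ) (a : G) :
    Fin (Fintype.card ((G × G) × (Fin t × Fin t))) ≃
      Fin (Fintype.card ((G × G) × (Fin t × Fin t))) :=
  (Fintype.equivFin _).symm.trans ((permK t a).trans (Fintype.equivFin _))

lemma bigPerm_mul {G : Type*} [Group G] [Fintype G] (t : ℕ) (a b : G)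
    (k : Fin (Fintype.card ((G × G) × (Fin t × Fin t)))) :
    bigPerm t (a * b) k = bigPerm t b (bigPerm t a k) := by
  simp [bigPerm, permK_mul]

def bigMat {G : Type*} [Group G] [Fintype G] (t : ℕ) (a : G) :
    Matrix (Fin (Fintype.card ((G × G) × (Fin t × Fin t))))
      (Fin (Fintype.card ((G × G) × (Fin t × Fin t)))) ℂ :=
  Matrix.of fun k l => if l = bigPerm t a k then 1 else 0

lemma bigMat_mul {G : Type*} [Group G] [Fintype G] (t : ℕ) (a b : G) :
    bigMat t a * bigMat t b = bigMat (G := G) t (a * b) := by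
  ext k l
  rw [Matrix.mul_apply]
  simp only [bigMat, Matrix.of_apply, ite_mul, one_mul, zero_mul]
  rw [Finset.sum_ite_eq' Finset.univ (bigPerm t a k)
    (fun m => if l = bigPerm t b m then (1:ℂ) else 0)]
  simp [bigPerm_mul]

lemma bigMat_one {G : Type*} [Group G] [Fintype G] (t : ℕ) :
    bigMat (G := G) t 1 = 1 := by
  ext k l
  simp [bigMat, bigPerm, permK_apply, Matrix.one_apply, eq_comm, Prod.ext_iff]

lemma bigMat_mulVec {G : Type*} [Group G] [Fintype G] (t : ℕ) (a : G)
    (v : Fin (Fintype.card ((G × G) × (Fin t × Fin t))) → ℂ) (k) :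
    (bigMat t a).mulVec v k = v (bigPerm t a k) := by
  rw [Matrix.mulVec, dotProduct]
  simp only [bigMat, Matrix.of_apply, ite_mul, one_mul, zero_mul]
  exact Finset.sum_ite_eq' Finset.univ (bigPerm t a k) v |>.trans (by simp)

lemma bigMat_unitary {G : Type*} [Group G] [Fintype G] (t : ℕ) (a : G) :
    bigMat (G := G) t a ∈ Matrix.unitaryGroup
      (Fin (Fintype.card ((G × G) × (Fin t × Fin t)))) ℂ := by
  rw [Matrix.mem_unitaryGroup_iff]
  ext k l
  rw [Matrix.mul_apply]
  simp only [bigMat, Matrix.star_apply, Matrix.of_apply, apply_ite (star : ℂ → ℂ), star_one, star_zero,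
    ite_mul, one_mul, zero_mul]
  rw [Finset.sum_ite_eq' Finset.univ (bigPerm t a k)
    (fun m => if m = bigPerm t a l then (1:ℂ) else 0)]
  simp [Matrix.one_apply, EmbeddingLike.apply_eq_iff_eq]

def liftK {G : Type*} [Group G] [Fintype G] {t : ℕ}
    (W : ((G × G) × (Fin t × Fin t)) → ℂ) :
    Fin (Fintype.card ((G × G) × (Fin t × Fin t))) → ℂ :=
  fun i => W ((Fintype.equivFin _).symm i)

lemma vnorm_liftK_le {G : Type*} [Group G] [Fintype G] {t : ℕ}
    (g : G → Matrix (Fin t) (Fin t) ℂ) :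
    vnorm (liftK (fun p => (Fintype.card G : ℂ)⁻¹ * ((g p.1.2 * (g p.1.1)ᴴ) p.2.1 p.2.2))) ≤
      (Fintype.card G : ℝ)⁻¹ * ∑ x, hsNormSq (g x) := by
  have hS : (0:ℝ) ≤ ∑ x, hsNormSq (g x) :=
    Finset.sum_nonneg fun _ _ => hsNormSq_nonneg _
  have hr : (0:ℝ) ≤ (Fintype.card G : ℝ)⁻¹ := by positivity
  rw [vnorm]
  have hsum : (∑ i, Complex.normSq
        (liftK (fun p => (Fintype.card G : ℂ)⁻¹ * ((g p.1.2 * (g p.1.1)ᴴ) p.2.1 p.2.2)) i)) =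
      ∑ p : (G × G) × (Fin t × Fin t),
        Complex.normSq ((Fintype.card G : ℂ)⁻¹ * ((g p.1.2 * (g p.1.1)ᴴ) p.2.1 p.2.2)) :=
    Fintype.sum_equiv (Fintype.equivFin _).symm _ _ fun i => rfl
  rw [hsum]
  have hnc : Complex.normSq ((Fintype.card G : ℂ)⁻¹) = ((Fintype.card G : ℝ)⁻¹)^2 := by
    rw [Complex.normSq_inv, Complex.normSq_natCast]
    push_cast
    rw [← sq, inv_pow]
  have expand : (∑ p : (G × G) × (Fin t × Fin t),
        Complex.normSq ((Fintype.card G : ℂ)⁻¹ * ((g p.1.2 * (g p.1.1)ᴴ) p.2.1 p.2.2))) =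
      ((Fintype.card G : ℝ)⁻¹)^2 * ∑ x, ∑ y, hsNormSq (g y * (g x)ᴴ) := by
    simp only [Fintype.sum_prod_type, Complex.normSq_mul, hnc, hsNormSq, Finset.mul_sum]
  rw [expand]
  have hb : (∑ x, ∑ y, hsNormSq (g y * (g x)ᴴ)) ≤ (∑ x, hsNormSq (g x))^2 := by
    calc (∑ x, ∑ y, hsNormSq (g y * (g x)ᴴ))
        ≤ ∑ x, ∑ y, hsNormSq (g y) * hsNormSq ((g x)ᴴ) :=
          Finset.sum_le_sum fun x _ => Finset.sum_le_sum fun y _ => hsNormSq_mul_le _ _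
      _ = (∑ x, hsNormSq (g x))^2 := by
          simp only [hsNormSq_conjTranspose, ← Finset.sum_mul, ← Finset.mul_sum]
          try rw [sq, Finset.sum_mul]
          try exact Finset.sum_congr rfl fun x _ => by ring
  calc Real.sqrt (((Fintype.card G : ℝ)⁻¹)^2 * ∑ x, ∑ y, hsNormSq (g y * (g x)ᴴ))
      ≤ Real.sqrt (((Fintype.card G : ℝ)⁻¹ * ∑ x, hsNormSq (g x))^2) := by
        apply Real.sqrt_le_sqrt
        rw [mul_pow]
        exact mul_le_mul_of_nonneg_left hb (by positivity)
    _ = (Fintype.card G : ℝ)⁻¹ * ∑ x, hsNormSq (g x) :=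
        Real.sqrt_sq (by positivity)

def bigRep (G : Type*) [Group G] [Fintype G] (t : ℕ) :
    G →* Matrix.unitaryGroup (Fin (Fintype.card ((G × G) × (Fin t × Fin t)))) ℂ where
  toFun a := ⟨bigMat t a, bigMat_unitary t a⟩
  map_one' := Subtype.ext (bigMat_one t)
  map_mul' a b := Subtype.ext (bigMat_mul t a b).symm

theorem psi_factorization {G : Type*} [Group G] [Fintype G] {t : ℕ}
    (f h : G → Matrix (Fin t) (Fin t) ℂ) :
    (∀ a : G, ((hsNormSq (conv h f a) : ℝ) : ℂ) =
      ((Fintype.card G : ℂ)⁻¹) ^ 2 * ∑ x, ∑ y,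
        ((f (y * a) * (f (x * a))ᴴ)ᴴ * (adjFun h y * (adjFun h x)ᴴ)).trace) ∧
    ∃ (n : ℕ) (π : G →* Matrix.unitaryGroup (Fin n) ℂ) (u v : Fin n → ℂ),
      (∀ a, ((hsNormSq (conv h f a) : ℝ) : ℂ) =
        ∑ i, (starRingEnd ℂ) (u i) * ((π a : Matrix (Fin n) (Fin n) ℂ).mulVec v) i) ∧
      vnorm u * vnorm v ≤ l2sq f * l2sq h := by
  have hstar : star ((Fintype.card G : ℂ)⁻¹) = (Fintype.card G : ℂ)⁻¹ := by simp
  have key : ∀ a : G, ((hsNormSq (conv h f a) : ℝ) : ℂ) =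
      ((Fintype.card G : ℂ)⁻¹) ^ 2 * ∑ x, ∑ y,
        ((f (y * a) * (f (x * a))ᴴ)ᴴ * (adjFun h y * (adjFun h x)ᴴ)).trace := by
    intro a
    have lhs_eq : ((hsNormSq (conv h f a) : ℝ) : ℂ) = ((conv h f a)ᴴ * conv h f a).trace := by
      rw [trace_conjTranspose_mul_eq, hsNormSq]
      push_cast
      rw [Finset.sum_comm]
      simp [Complex.normSq_eq_conj_mul_self]
    rw [lhs_eq, conv]
    rw [Matrix.conjTranspose_smul, hstar, Matrix.smul_mul, Matrix.mul_smul, smul_smul,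
      Matrix.trace_smul, Matrix.conjTranspose_sum, Matrix.sum_mul]
    simp only [Matrix.mul_sum]
    rw [Matrix.trace_sum]
    simp only [Matrix.trace_sum]
    have reindex : ∀ (T : G → ℂ), ∑ x, T x = ∑ x, T (x * a) := fun T =>
      (Fintype.sum_equiv (Equiv.mulRight a) (fun x => T (x * a)) T fun x => rfl).symm
    have main : (∑ x, ∑ y, ((h (a * x⁻¹) * f x)ᴴ * (h (a * y⁻¹) * f y)).trace)
        = ∑ x, ∑ y, ((f (y * a) * (f (x * a))ᴴ)ᴴ * (adjFun h y * (adjFun h x)ᴴ)).trace := by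
      calc (∑ x, ∑ y, ((h (a * x⁻¹) * f x)ᴴ * (h (a * y⁻¹) * f y)).trace)
          = ∑ x, ∑ y, ((h (a * (x * a)⁻¹) * f (x * a))ᴴ * (h (a * (y * a)⁻¹) * f (y * a))).trace := by
            rw [reindex (fun x => ∑ y, ((h (a * x⁻¹) * f x)ᴴ * (h (a * y⁻¹) * f y)).trace)]
            exact Finset.sum_congr rfl fun x _ =>
              reindex (fun y => ((h (a * (x * a)⁻¹) * f (x * a))ᴴ * (h (a * y⁻¹) * f y)).trace)
        _ = ∑ x, ∑ y, ((f (y * a) * (f (x * a))ᴴ)ᴴ * (adjFun h y * (adjFun h x)ᴴ)).trace := by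
            rw [Finset.sum_comm]
            refine Finset.sum_congr rfl fun x _ => Finset.sum_congr rfl fun y _ => ?_
            simp only [adjFun, Matrix.conjTranspose_mul, Matrix.conjTranspose_conjTranspose,
              _root_.mul_inv_rev, mul_inv_cancel_left]
            conv_lhs => rw [Matrix.trace_mul_comm]
            conv_rhs => rw [Matrix.trace_mul_comm]
            simp only [Matrix.mul_assoc]
            conv_rhs => rw [Matrix.trace_mul_comm]
            simp [Matrix.mul_assoc]
    rw [main, smul_eq_mul, ← sq]
  refine ⟨key, ?_⟩
  have hconj : (starRingEnd ℂ) ((Fintype.card G : ℂ)⁻¹) = (Fintype.card G : ℂ)⁻¹ := by simp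
  refine ⟨Fintype.card ((G × G) × (Fin t × Fin t)), bigRep G t,
    liftK (fun p => (Fintype.card G : ℂ)⁻¹ *
      ((adjFun h p.1.2 * (adjFun h p.1.1)ᴴ) p.2.1 p.2.2)),
    liftK (fun p => (Fintype.card G : ℂ)⁻¹ *
      ((f p.1.2 * (f p.1.1)ᴴ) p.2.1 p.2.2)), ?_, ?_⟩
  · intro a
    have hψ : ((hsNormSq (conv h f a) : ℝ) : ℂ) =
        (starRingEnd ℂ) (((hsNormSq (conv h f a) : ℝ) : ℂ)) := (Complex.conj_ofReal _).symm
    rw [hψ, key a]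
    have hco : ((bigRep G t a : Matrix
        (Fin (Fintype.card ((G × G) × (Fin t × Fin t))))
        (Fin (Fintype.card ((G × G) × (Fin t × Fin t)))) ℂ)) = bigMat t a := rfl
    rw [hco]
    have step1 : (∑ i, (starRingEnd ℂ)
          (liftK (fun p => (Fintype.card G : ℂ)⁻¹ *
            ((adjFun h p.1.2 * (adjFun h p.1.1)ᴴ) p.2.1 p.2.2)) i) *
          ((bigMat t a).mulVec (liftK (fun p => (Fintype.card G : ℂ)⁻¹ *
            ((f p.1.2 * (f p.1.1)ᴴ) p.2.1 p.2.2))) i)) =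
        ∑ p : (G × G) × (Fin t × Fin t),
          (starRingEnd ℂ) ((Fintype.card G : ℂ)⁻¹ *
            ((adjFun h p.1.2 * (adjFun h p.1.1)ᴴ) p.2.1 p.2.2)) *
          ((Fintype.card G : ℂ)⁻¹ *
            ((f (p.1.2 * a) * (f (p.1.1 * a))ᴴ) p.2.1 p.2.2)) := by
      refine Fintype.sum_equiv (Fintype.equivFin _).symm _ _ fun i => ?_
      rw [bigMat_mulVec]
      simp [liftK, bigPerm, permK_apply]
    rw [step1]
    rw [Fintype.sum_prod_type]
    simp only [Fintype.sum_prod_type]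
    simp only [trace_conjTranspose_mul_eq, _root_.map_mul, _root_.map_pow, _root_.map_sum,
      hconj, Complex.conj_conj, Matrix.conjTranspose_apply]
    simp only [Finset.mul_sum]
    refine Finset.sum_congr rfl fun x _ => Finset.sum_congr rfl fun y _ => ?_
    rw [Finset.sum_comm]
    refine Finset.sum_congr rfl fun i _ => Finset.sum_congr rfl fun j _ => ?_
    ring
  · have hu := vnorm_liftK_le (adjFun h)
    have hv := vnorm_liftK_le f
    have hadj : (∑ x, hsNormSq (adjFun h x)) = ∑ x, hsNormSq (h x) := by
      refine Fintype.sum_equiv (Equiv.inv G) _ _ fun x => ?_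
      simp [adjFun, hsNormSq_conjTranspose]
    rw [hadj] at hu
    have h1 : (0:ℝ) ≤ vnorm (liftK (fun p => (Fintype.card G : ℂ)⁻¹ *
        ((adjFun h p.1.2 * (adjFun h p.1.1)ᴴ) p.2.1 p.2.2))) := Real.sqrt_nonneg _
    have h2 : (0:ℝ) ≤ vnorm (liftK (fun p => (Fintype.card G : ℂ)⁻¹ *
        ((f p.1.2 * (f p.1.1)ᴴ) p.2.1 p.2.2))) := Real.sqrt_nonneg _
    have hlf : (0:ℝ) ≤ (Fintype.card G : ℝ)⁻¹ * ∑ x, hsNormSq (f x) :=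
      mul_nonneg (by positivity) (Finset.sum_nonneg fun _ _ => hsNormSq_nonneg _)
    calc _ ≤ ((Fintype.card G : ℝ)⁻¹ * ∑ x, hsNormSq (h x)) *
          ((Fintype.card G : ℝ)⁻¹ * ∑ x, hsNormSq (f x)) := mul_le_mul hu hv h2 (le_trans h1 hu)
      _ = l2sq f * l2sq h := by rw [l2sq, l2sq]; ring
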